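/- Let f_t be a C¹ family (in both variables) of circle diffeomorphisms with f_0 = R_α the rotation by an irrational α. Then ρ(t) (a continuous lift of the rotation number) is differentiable at t = 0 with ρ'(0) = ∫_{S¹} ∂f_t/∂t(x, 0) dx. -/

import Mathlib

open Filter Topology Set

noncomputable section

abbrev S1 : Type := AddCircle (1 : ℝ)

/-- `F : ℝ → ℝ` is a lift of the orientation-preserving circle map `f`. -/
def IsLiftOf (F : ℝ → ℝ) (f : S1 → S1) : Prop :=
  StrictMono F ∧ Continuous F ∧ (∀ x, F (x + 1) = F x + 1) ∧
    ∀ x : ℝ, ((F x : ℝ) : S1) = f (x : S1)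

/-- `τ` is the translation number of the lift `F`. -/
def HasTransNum (F : ℝ → ℝ) (τ : ℝ) : Prop :=
  Tendsto (fun n : ℕ => F^[n] 0 / (n : ℝ)) atTop (𝓝 τ)

/-- `r` is the rotation number of the circle map `f`. -/
def HasRotNum (f : S1 → S1) (r : S1) : Prop :=
  ∃ F τ, IsLiftOf F f ∧ HasTransNum F τ ∧ ((τ : ℝ) : S1) = r


theorem transNum_le {F : ℝ → ℝ} {τ c : ℝ} (h : HasTransNum F τ)
    (hb : ∀ x, F x ≤ x + c) : τ ≤ c := by
  have key : ∀ n : ℕ, F^[n] 0 ≤ n * c := by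
    intro n; induction n with
    | zero => simp
    | succ n ih =>
      rw [Function.iterate_succ_apply']
      calc F (F^[n] 0) ≤ F^[n] 0 + c := hb _
        _ ≤ n * c + c := by linarith
        _ = (n+1 : ℕ) * c := by push_cast; ring
  refine le_of_tendsto h ?_
  filter_upwards [eventually_gt_atTop 0] with n hn
  rw [div_le_iff₀ (by positivity)]
  calc F^[n] 0 ≤ n * c := key n
    _ = c * n := mul_comm _ _

theorem transNum_ge {F : ℝ → ℝ} {τ c : ℝ} (h : HasTransNum F τ)
    (hb : ∀ x, x + c ≤ F x) : c ≤ τ := by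
  have key : ∀ n : ℕ, (n : ℝ) * c ≤ F^[n] 0 := by
    intro n; induction n with
    | zero => simp
    | succ n ih =>
      rw [Function.iterate_succ_apply']
      calc ((n+1 : ℕ) : ℝ) * c = n * c + c := by push_cast; ring
        _ ≤ F^[n] 0 + c := by linarith
        _ ≤ F (F^[n] 0) := hb _
  refine ge_of_tendsto h ?_
  filter_upwards [eventually_gt_atTop 0] with n hn
  rw [le_div_iff₀ (by positivity)]
  calc c * n = n * c := mul_comm _ _
    _ ≤ F^[n] 0 := key n

theorem transNum_iterate {F : ℝ → ℝ} {τ : ℝ} (h : HasTransNum F τ) (N : ℕ) (hN : 0 < N) :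
    HasTransNum F^[N] ((N : ℝ) * τ) := by
  have h1 : Tendsto (fun n : ℕ => F^[N * n] 0 / ((N * n : ℕ) : ℝ)) atTop (𝓝 τ) :=
    h.comp (tendsto_atTop_atTop_of_monotone (fun a b hab => Nat.mul_le_mul_left N hab)
      (fun b => ⟨b, Nat.le_mul_of_pos_left b hN⟩))
  have h2 := h1.const_mul (N : ℝ)
  unfold HasTransNum
  have : ∀ᶠ n : ℕ in atTop, (N : ℝ) * (F^[N * n] 0 / ((N * n : ℕ) : ℝ)) = (F^[N])^[n] 0 / (n : ℝ) := by
    filter_upwards [eventually_gt_atTop 0] with n hn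
    rw [Function.iterate_mul]
    push_cast
    field_simp
  exact Tendsto.congr' this h2


theorem dense_int_alpha {α : ℝ} (hα : Irrational α) (z η : ℝ) (hη : 0 < η) :
    ∃ m n : ℤ, |z - (m * α + n)| < η := by
  set S : AddSubgroup ℝ :=
    { carrier := {x | ∃ m n : ℤ, x = m * α + n}
      zero_mem' := ⟨0, 0, by simp⟩
      add_mem' := by rintro a b ⟨m, n, rfl⟩ ⟨m', n', rfl⟩; exact ⟨m + m', n + n', by push_cast; ring⟩
      neg_mem' := by rintro a ⟨m, n, rfl⟩; exact ⟨-m, -n, by push_cast; ring⟩ } with hS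
  have hdense : Dense (S : Set ℝ) := by
    rcases S.dense_or_cyclic with h | ⟨a, ha⟩
    · exact h
    · exfalso
      have hαS : α ∈ S := ⟨1, 0, by simp⟩
      have h1S : (1:ℝ) ∈ S := ⟨0, 1, by simp⟩
      rw [ha, AddSubgroup.mem_closure_singleton] at hαS h1S
      obtain ⟨m, hm⟩ := hαS
      obtain ⟨n, hn⟩ := h1S
      have hn0 : n ≠ 0 := by rintro rfl; simp at hn
      have hna : (n : ℝ) * a = 1 := by rw [← hn]; simp [zsmul_eq_mul]
      have hma : (m : ℝ) * a = α := by rw [← hm]; simp [zsmul_eq_mul]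
      have hcn : (n:ℝ) ≠ 0 := Int.cast_ne_zero.mpr hn0
      have key : α * n = m := by
        calc α * n = (m * a) * n := by rw [hma]
          _ = m * (n * a) := by ring
          _ = m := by rw [hna]; ring
      have hαq : α = (m : ℝ) / n := by
        field_simp
        linarith [key]
      have : ¬ Irrational ((m : ℝ) / n) := by
        have : ((m / n : ℚ) : ℝ) = (m : ℝ) / n := by push_cast; ring
        rw [← this]; exact Rat.not_irrational _
      exact this (hαq ▸ hα)
  obtain ⟨y, hyb, hyS⟩ := Metric.dense_iff.mp hdense z η hη
  obtain ⟨m, n, rfl⟩ := hyS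
  exact ⟨m, n, by simpa [Real.dist_eq, abs_sub_comm] using hyb⟩


theorem phi_bound_uc (φ : ℝ → ℝ) (hφcont : Continuous φ)
    (hφint : ∀ (n : ℤ) (x : ℝ), φ (x - n) = φ x) :
    (∃ M : ℝ, 0 ≤ M ∧ ∀ x, |φ x| ≤ M) ∧
    (∀ δ > (0:ℝ), ∃ r > (0:ℝ), ∀ y z : ℝ, |y - z| < r → |φ y - φ z| ≤ δ) := by
  constructor
  · obtain ⟨C, hC⟩ := isCompact_Icc.exists_bound_of_continuousOn
      (s := Icc (0:ℝ) 1) hφcont.continuousOn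
    refine ⟨C, le_trans (norm_nonneg (φ 0)) (hC 0 (by norm_num)), fun x => ?_⟩
    have h1 : φ (x - ⌊x⌋) = φ x := hφint ⌊x⌋ x
    have h2 : x - ⌊x⌋ ∈ Icc (0:ℝ) 1 := by
      constructor
      · linarith [Int.floor_le x]
      · linarith [Int.lt_floor_add_one x]
    calc |φ x| = ‖φ (x - ⌊x⌋)‖ := by rw [h1]; rfl
      _ ≤ C := hC _ h2
  · intro δ hδ
    have hUC := isCompact_Icc.uniformContinuousOn_of_continuous
      (s := Icc (-1:ℝ) 2) hφcont.continuousOn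
    rw [Metric.uniformContinuousOn_iff] at hUC
    obtain ⟨r', hr', h⟩ := hUC δ hδ
    refine ⟨min r' 1, by positivity, fun y z hyz => ?_⟩
    have hyz1 : |y - z| < 1 := lt_of_lt_of_le hyz (min_le_right _ _)
    have hyzr : |y - z| < r' := lt_of_lt_of_le hyz (min_le_left _ _)
    set m := ⌊z⌋ with hm
    have hz : z - m ∈ Icc (-1:ℝ) 2 := by
      constructor
      · linarith [Int.floor_le z]
      · linarith [Int.lt_floor_add_one z]
    have hy : y - m ∈ Icc (-1:ℝ) 2 := by
      have h1 := abs_lt.mp hyz1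
      constructor
      · linarith [Int.floor_le z, h1.1]
      · linarith [Int.lt_floor_add_one z, h1.2]
    have hd : dist (y - (m:ℝ)) (z - m) < r' := by
      rw [Real.dist_eq]
      have : y - m - (z - m) = y - z := by ring
      rw [this]; exact hyzr
    have := h _ hy _ hz hd
    rw [Real.dist_eq] at this
    rw [← hφint m y, ← hφint m z]
    exact le_of_lt this


theorem lin_approx (ε : ℝ) (hε : 0 < ε) (F : ℝ → ℝ → ℝ) (α : ℝ)
    (Φ : ℝ → ℝ → ℝ) (φ : ℝ → ℝ) (hφ : ∀ x, φ x = Φ x 0)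
    (h0 : ∀ x : ℝ, F x 0 = x + α)
    (hΦcont : ContinuousOn (fun p : ℝ × ℝ => Φ p.1 p.2) ((univ : Set ℝ) ×ˢ Ioo (-ε) ε))
    (hFTC : ∀ x : ℝ, ∀ t ∈ Ioo (-ε) ε, F x t - F x 0 = ∫ s in (0:ℝ)..t, Φ x s)
    (hΦxcont : ∀ x : ℝ, ∀ t ∈ Ioo (-ε) ε, ContinuousOn (fun s => Φ x s) (uIcc (0:ℝ) t))
    (hFint : ∀ (n : ℤ) (x t : ℝ), t ∈ Ioo (-ε) ε → F (x - n) t = F x t - n)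
    (hφint : ∀ (n : ℤ) (x : ℝ), φ (x - n) = φ x) :
    ∀ δ > (0:ℝ), ∃ r > (0:ℝ), r ≤ ε/2 ∧ ∀ t : ℝ, |t| < r → ∀ x : ℝ,
      |F x t - (x + α + t * φ x)| ≤ δ * |t| := by
  intro δ hδ
  set K : Set (ℝ × ℝ) := Icc (0:ℝ) 1 ×ˢ Icc (-(ε/2)) (ε/2) with hK
  have hKsub : K ⊆ (univ : Set ℝ) ×ˢ Ioo (-ε) ε := by
    rintro ⟨x, s⟩ ⟨hx, hs⟩
    exact ⟨mem_univ x, ⟨by simp at hs ⊢; linarith [hs.1], by simp at hs ⊢; linarith [hs.2]⟩⟩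
  have hKc : IsCompact K := isCompact_Icc.prod isCompact_Icc
  have hUC := hKc.uniformContinuousOn_of_continuous (hΦcont.mono hKsub)
  rw [Metric.uniformContinuousOn_iff] at hUC
  obtain ⟨r', hr', hUCr⟩ := hUC δ hδ
  refine ⟨min r' (ε/2), by positivity, min_le_right _ _, fun t ht x => ?_⟩
  have htε2 : |t| < ε/2 := lt_of_lt_of_le ht (min_le_right _ _)
  have htr' : |t| < r' := lt_of_lt_of_le ht (min_le_left _ _)
  have htI : t ∈ Ioo (-ε) ε := by
    have := abs_lt.mp htε2; exact ⟨by linarith [this.1], by linarith [this.2]⟩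
  -- reduce to x ∈ Icc 0 1
  have key : ∀ y ∈ Icc (0:ℝ) 1, |F y t - (y + α + t * φ y)| ≤ δ * |t| := by
    intro y hy
    have hmemK : ∀ s : ℝ, |s| ≤ |t| → (y, s) ∈ K := by
      intro s hs
      refine ⟨hy, ?_⟩
      have := abs_le.mp (le_of_lt (lt_of_le_of_lt hs htε2))
      exact ⟨by linarith [this.1], this.2⟩
    have hbound : ∀ s ∈ uIoc (0:ℝ) t, ‖Φ y s - Φ y 0‖ ≤ δ := by
      intro s hs
      have hs' : s ∈ uIcc (0:ℝ) t := uIoc_subset_uIcc hs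
      have habs : |s| ≤ |t| := by
        rcases le_total 0 t with h | h
        · rw [uIcc_of_le (by linarith : (0:ℝ) ≤ t)] at hs'
          rw [abs_of_nonneg hs'.1, abs_of_nonneg h]; exact hs'.2
        · rw [uIcc_of_ge (by linarith : t ≤ (0:ℝ))] at hs'
          rw [abs_of_nonpos hs'.2, abs_of_nonpos h]; linarith [hs'.1]
      have hd : dist ((y, s) : ℝ × ℝ) (y, 0) < r' := by
        rw [Prod.dist_eq]
        simp only [dist_self, Real.dist_eq, sub_zero]
        calc max (0:ℝ) |s| = |s| := max_eq_right (abs_nonneg s)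
          _ ≤ |t| := habs
          _ < r' := htr'
      have := hUCr _ (hmemK s habs) _ (hmemK 0 (by simp)) hd
      rw [Real.dist_eq] at this
      exact le_of_lt this
    have hint : IntervalIntegrable (fun s => Φ y s) MeasureTheory.volume 0 t :=
      (hΦxcont y t htI).intervalIntegrable
    have heq : F y t - (y + α + t * φ y) = ∫ s in (0:ℝ)..t, (Φ y s - Φ y 0) := by
      rw [intervalIntegral.integral_sub hint intervalIntegrable_const,
        intervalIntegral.integral_const]
      have := hFTC y t htI
      rw [h0 y] at this
      rw [hφ y]
      rw [← this]
      simp [smul_eq_mul]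
      ring
    rw [heq]
    calc ‖∫ s in (0:ℝ)..t, (Φ y s - Φ y 0)‖ ≤ δ * |t - 0| :=
          intervalIntegral.norm_integral_le_of_norm_le_const hbound
      _ = δ * |t| := by rw [sub_zero]
  -- general x
  set n := ⌊x⌋ with hn
  have hx1 : x - n ∈ Icc (0:ℝ) 1 :=
    ⟨by linarith [Int.floor_le x], by linarith [Int.lt_floor_add_one x]⟩
  have h1 := key (x - n) hx1
  rw [hFint n x t htI, hφint n x] at h1
  have : F x t - ↑n - (x - ↑n + α + t * φ x) = F x t - (x + α + t * φ x) := by ring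
  rwa [this] at h1



theorem birkhoff_unif (φ : ℝ → ℝ) (hφcont : Continuous φ)
    (hφint : ∀ (n : ℤ) (x : ℝ), φ (x - n) = φ x)
    (M : ℝ) (hM : 0 ≤ M) (hMb : ∀ x, |φ x| ≤ M)
    (hUC : ∀ δ > (0:ℝ), ∃ r > (0:ℝ), ∀ y z : ℝ, |y - z| < r → |φ y - φ z| ≤ δ)
    (α : ℝ) (hα : Irrational α) :
    ∀ δ > (0:ℝ), ∃ N : ℕ, 0 < N ∧ ∀ x : ℝ,
      |(∑ j ∈ Finset.range N, φ (x + j * α)) / N - ∫ u in (0:ℝ)..1, φ u| ≤ δ := by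
  intro δ hδ
  set D := ∫ u in (0:ℝ)..1, φ u with hD
  set S : ℕ → ℝ → ℝ := fun N w => ∑ j ∈ Finset.range N, φ (w + j * α) with hS
  have hφper : Function.Periodic φ 1 := by
    intro x
    have := hφint (-1) x
    push_cast at this
    simpa [sub_neg_eq_add] using this
  have hScont : ∀ N, Continuous (S N) := by
    intro N
    exact continuous_finset_sum _ fun j _ => hφcont.comp (continuous_id.add continuous_const)
  have hSint : ∀ N (n : ℤ) (w : ℝ), S N (w - n) = S N w := by
    intro N n w
    refine Finset.sum_congr rfl fun j _ => ?_
    have : w - ↑n + ↑j * α = (w + ↑j * α) - ↑n := by ring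
    rw [this, hφint]
  have hSshift1 : ∀ N w, S N (w + α) = S N w + φ (w + N * α) - φ w := by
    intro N w
    have h3 : ∀ j : ℕ, φ (w + ((j:ℕ) + 1 : ℕ) * α) = φ (w + α + j * α) := by
      intro j; congr 1; push_cast; ring
    have h4 : S N (w + α) = ∑ j ∈ Finset.range N, φ (w + ((j + 1 : ℕ)) * α) := by
      refine Finset.sum_congr rfl fun j _ => (h3 j).symm
    have h5 : φ (w + ((0:ℕ):ℝ) * α) = φ w := by norm_num
    have hkey : ∑ j ∈ Finset.range N, φ (w + ((j + 1 : ℕ)) * α)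
        = (∑ j ∈ Finset.range N, φ (w + (j:ℕ) * α)) + φ (w + (N:ℕ) * α)
          - φ (w + ((0:ℕ):ℝ) * α) := by
      have h1 := Finset.sum_range_succ (fun j : ℕ => φ (w + j * α)) N
      have h2 := Finset.sum_range_succ' (fun j : ℕ => φ (w + j * α)) N
      rw [h1] at h2
      linarith [h2]
    rw [h4, hkey, h5, hS]
  have hSm : ∀ N (m : ℕ) (w : ℝ), |S N (w + m * α) - S N w| ≤ 2 * M * m := by
    intro N m
    induction m with
    | zero => intro w; simp
    | succ m ih =>
      intro w
      have h1 := ih w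
      have h2 := hSshift1 N (w + m * α)
      have h3 : w + ((m:ℕ)+1:ℕ) * α = (w + m * α) + α := by push_cast; ring
      rw [h3, h2]
      have e : S N (w + m * α) + φ (w + m * α + N * α) - φ (w + m * α) - S N w
          = (S N (w + m * α) - S N w) + (φ (w + m * α + N * α) - φ (w + m * α)) := by ring
      rw [e]
      refine le_trans (abs_add_le _ _) ?_
      have h6 : |φ (w + m * α + N * α) - φ (w + m * α)| ≤ |φ (w + m * α + N * α)| + |φ (w + m * α)| :=
        abs_sub _ _
      push_cast
      linarith [hMb (w + m * α + N * α), hMb (w + m * α), h1, h6]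
  have hSz : ∀ N (m : ℤ) (w : ℝ), |S N (w + m * α) - S N w| ≤ 2 * M * m.natAbs := by
    intro N m w
    have habs : ((m.natAbs : ℝ)) = |(m:ℝ)| := by
      rw [Nat.cast_natAbs]
      exact_mod_cast rfl
    rcases le_or_gt 0 m with h | h
    · have hc : ((m:ℝ)) = (m.natAbs : ℝ) := by
        rw [habs, abs_of_nonneg (by exact_mod_cast h : (0:ℝ) ≤ m)]
      rw [hc]; exact hSm N m.natAbs w
    · have hc : ((m:ℝ)) = -(m.natAbs : ℝ) := by
        rw [habs, abs_of_neg (by exact_mod_cast h : (m:ℝ) < 0)]; ring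
      have h2 := hSm N m.natAbs (w + m * α)
      have harg : w + (m:ℝ) * α + (m.natAbs : ℝ) * α = w := by rw [hc]; ring
      rw [harg] at h2
      rw [abs_sub_comm] at h2
      exact h2
  -- integral invariance
  have hint_shift : ∀ c : ℝ, ∫ u in (0:ℝ)..1, φ (u + c) = D := by
    intro c
    have h1 := hφper.intervalIntegral_add_eq c 0
    simp only [zero_add] at h1
    rw [intervalIntegral.integral_comp_add_right φ c, zero_add, add_comm 1 c, h1]
  have hSavg : ∀ N : ℕ, ∫ u in (0:ℝ)..1, S N u = N * D := by
    intro N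
    rw [hS]
    simp only
    rw [intervalIntegral.integral_finset_sum]
    · have heach : ∀ j ∈ Finset.range N, ∫ (x : ℝ) in (0:ℝ)..1, φ (x + (j:ℕ) * α) = D :=
        fun j _ => hint_shift _
      rw [Finset.sum_congr rfl heach, Finset.sum_const, Finset.card_range, nsmul_eq_mul]
    · intro j _
      exact ((hφcont.comp (continuous_id.add continuous_const)).intervalIntegrable 0 1)
  -- cover
  obtain ⟨r, hr, hUCr⟩ := hUC (δ/2) (by linarith)
  have hcover : Icc (0:ℝ) 1 ⊆ ⋃ p : ℤ × ℤ, Metric.ball ((p.1 : ℝ) * α + p.2) r := by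
    intro z _
    obtain ⟨m, n, hmn⟩ := dense_int_alpha hα z r hr
    exact mem_iUnion.mpr ⟨(m, n), by simpa [Metric.mem_ball, Real.dist_eq] using hmn⟩
  obtain ⟨tfin, htfin⟩ := isCompact_Icc.elim_finite_subcover
    (fun p : ℤ × ℤ => Metric.ball ((p.1 : ℝ) * α + p.2) r) (fun p => Metric.isOpen_ball) hcover
  set K₀ : ℕ := tfin.sup (fun p => p.1.natAbs) with hK₀
  obtain ⟨N₀, hN₀⟩ := exists_nat_ge (4 * M * K₀ / δ)
  set N := max 1 N₀ with hN
  have hN1 : 0 < N := lt_of_lt_of_le one_pos (le_max_left _ _)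
  have hNR : (0:ℝ) < N := by exact_mod_cast hN1
  have hNbig : 2 * M * K₀ ≤ δ / 2 * N := by
    have h1 : (N₀ : ℝ) ≤ N := by exact_mod_cast le_max_right 1 N₀
    have h2 : 4 * M * K₀ / δ ≤ (N : ℝ) := le_trans hN₀ h1
    have h3 : 4 * M * K₀ ≤ δ * N := by
      rw [div_le_iff₀ hδ] at h2; linarith [h2]
    linarith
  refine ⟨N, hN1, fun x => ?_⟩
  -- oscillation bound
  have hosc : ∀ y : ℝ, |S N x - S N y| ≤ δ * N := by
    intro y
    set z := Int.fract (y - x) with hz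
    have hz01 : z ∈ Icc (0:ℝ) 1 := ⟨Int.fract_nonneg _, le_of_lt (Int.fract_lt_one _)⟩
    have hy_eq : S N y = S N (x + z) := by
      have : x + z = y - ⌊y - x⌋ := by rw [hz, Int.fract]; ring
      rw [this, hSint]
    obtain ⟨p, hp, hpz⟩ := by
      have := htfin hz01
      simpa only [mem_iUnion, exists_prop] using this
    rw [Metric.mem_ball, Real.dist_eq] at hpz
    -- |z - (p.1 α + p.2)| < r
    have hstep1 : |S N (x + z) - S N (x + p.1 * α + p.2)| ≤ δ / 2 * N := by
      have : S N (x + z) - S N (x + p.1 * α + p.2) =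
          ∑ j ∈ Finset.range N, (φ (x + z + j * α) - φ (x + p.1 * α + p.2 + j * α)) := by
        rw [hS]; simp only; rw [← Finset.sum_sub_distrib]
      rw [this]
      calc |∑ j ∈ Finset.range N, (φ (x + z + j * α) - φ (x + p.1 * α + p.2 + j * α))|
          ≤ ∑ j ∈ Finset.range N, |φ (x + z + j * α) - φ (x + p.1 * α + p.2 + j * α)| :=
            Finset.abs_sum_le_sum_abs _ _
        _ ≤ ∑ j ∈ Finset.range N, δ / 2 := by
            refine Finset.sum_le_sum fun j _ => hUCr _ _ ?_
            have : x + z + j * α - (x + p.1 * α + p.2 + j * α) = z - (p.1 * α + p.2) := by ring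
            rw [this]; exact hpz
        _ = δ / 2 * N := by
            rw [Finset.sum_const, Finset.card_range, nsmul_eq_mul]; ring
    have hstep2 : S N (x + p.1 * α + p.2) = S N (x + p.1 * α) := by
      have : x + p.1 * α + p.2 = (x + p.1 * α) - (-p.2 : ℤ) := by push_cast; ring
      rw [this, hSint]
    have hstep3 : |S N (x + p.1 * α) - S N x| ≤ δ / 2 * N := by
      refine le_trans (hSz N p.1 x) (le_trans ?_ hNbig)
      have : (p.1.natAbs : ℝ) ≤ K₀ := by
        exact_mod_cast Nat.cast_le.mpr (Finset.le_sup (f := fun p : ℤ × ℤ => p.1.natAbs) hp)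
      nlinarith
    calc |S N x - S N y| = |S N x - S N (x + z)| := by rw [hy_eq]
      _ = |S N (x + z) - S N x| := abs_sub_comm _ _
      _ ≤ |S N (x + z) - S N (x + p.1 * α + p.2)| + |S N (x + p.1 * α + p.2) - S N x| :=
          abs_sub_le _ _ _
      _ ≤ δ / 2 * N + δ / 2 * N :=
          add_le_add hstep1 (by rw [hstep2]; exact hstep3)
      _ = δ * N := by ring
  -- conclude
  have havg : ∫ u in (0:ℝ)..1, (S N x - S N u) = S N x - N * D := by
    rw [intervalIntegral.integral_sub intervalIntegrable_const
      ((hScont N).intervalIntegrable 0 1), hSavg, intervalIntegral.integral_const]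
    simp
  have hb : |S N x - N * D| ≤ δ * N := by
    rw [← havg]
    calc ‖∫ u in (0:ℝ)..1, (S N x - S N u)‖ ≤ δ * N * |1 - 0| :=
        intervalIntegral.norm_integral_le_of_norm_le_const fun u _ => hosc u
      _ = δ * N := by simp
  have hfin : |S N x / N - D| ≤ δ := by
    have he : S N x / N - D = (S N x - N * D) / N := by field_simp
    rw [he, abs_div, abs_of_pos hNR, div_le_iff₀ hNR]
    exact hb
  simpa [hS, hD] using hfin


theorem iter_approx (ε : ℝ) (hε : 0 < ε) (F : ℝ → ℝ → ℝ) (α : ℝ) (φ : ℝ → ℝ)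
    (M : ℝ) (hM : 0 ≤ M) (hMb : ∀ x, |φ x| ≤ M)
    (hUC : ∀ δ > (0:ℝ), ∃ r > (0:ℝ), ∀ y z : ℝ, |y - z| < r → |φ y - φ z| ≤ δ)
    (hL1 : ∀ δ > (0:ℝ), ∃ r > (0:ℝ), r ≤ ε/2 ∧ ∀ t : ℝ, |t| < r → ∀ x : ℝ,
      |F x t - (x + α + t * φ x)| ≤ δ * |t|) :
    ∀ k : ℕ, ∀ δ > (0:ℝ), ∃ r > (0:ℝ), r ≤ ε/2 ∧ ∀ t : ℝ, |t| < r → ∀ x : ℝ,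
      |(fun y => F y t)^[k] x - (x + k * α + t * ∑ j ∈ Finset.range k, φ (x + j * α))|
        ≤ δ * |t| := by
  intro k
  induction k with
  | zero =>
    intro δ hδ
    refine ⟨ε/2, by positivity, le_refl _, fun t ht x => ?_⟩
    simp only [Function.iterate_zero_apply, Finset.range_zero, Finset.sum_empty, Nat.cast_zero,
      mul_zero, zero_mul, add_zero]
    have hz : |x - x| = 0 := by norm_num
    rw [hz]; positivity
  | succ k ih =>
    intro δ hδ
    have hδ2 : (0:ℝ) < δ/3 := by linarith
    obtain ⟨r₁, hr₁, hUCr⟩ := hUC (δ/3) hδ2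
    set δ' := min (δ/3) (r₁/2) with hδ'
    have hδ'pos : 0 < δ' := lt_min hδ2 (by linarith)
    obtain ⟨r₂, hr₂, hr₂ε, hIH⟩ := ih δ' hδ'pos
    obtain ⟨r₃, hr₃, hr₃ε, hL⟩ := hL1 (δ/3) hδ2
    set r₄ : ℝ := r₁ / (2 * (k * M + 1)) with hr₄def
    have hr₄ : 0 < r₄ := by positivity
    refine ⟨min (min r₂ r₃) (min r₄ (min 1 (ε/2))), by positivity, ?_, ?_⟩
    · calc min (min r₂ r₃) (min r₄ (min 1 (ε/2))) ≤ min r₄ (min 1 (ε/2)) := min_le_right _ _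
        _ ≤ min 1 (ε/2) := min_le_right _ _
        _ ≤ ε/2 := min_le_right _ _
    intro t ht x
    have ht2 : |t| < r₂ := lt_of_lt_of_le ht (le_trans (min_le_left _ _) (min_le_left _ _))
    have ht3 : |t| < r₃ := lt_of_lt_of_le ht (le_trans (min_le_left _ _) (min_le_right _ _))
    have ht4 : |t| < r₄ := lt_of_lt_of_le ht (le_trans (min_le_right _ _) (min_le_left _ _))
    have ht1 : |t| ≤ 1 := le_of_lt (lt_of_lt_of_le ht
      (le_trans (min_le_right _ _) (le_trans (min_le_right _ _) (min_le_left _ _))))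
    set S : ℝ := ∑ j ∈ Finset.range k, φ (x + j * α) with hSdef
    set y : ℝ := (fun y => F y t)^[k] x with hy
    set y₀ : ℝ := x + k * α + t * S with hy₀
    have hIHx : |y - y₀| ≤ δ' * |t| := hIH t ht2 x
    have hSb : |S| ≤ k * M := by
      calc |S| ≤ ∑ j ∈ Finset.range k, |φ (x + j * α)| := Finset.abs_sum_le_sum_abs _ _
        _ ≤ ∑ j ∈ Finset.range k, M := Finset.sum_le_sum fun j _ => hMb _
        _ = k * M := by rw [Finset.sum_const, Finset.card_range, nsmul_eq_mul]
    have hyy₀ : |y - y₀| ≤ r₁ / 2 := by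
      calc |y - y₀| ≤ δ' * |t| := hIHx
        _ ≤ (r₁/2) * 1 := by
            have h1 : δ' ≤ r₁/2 := min_le_right _ _
            have := abs_nonneg t
            nlinarith
        _ = r₁/2 := mul_one _
    have hykα : |y - (x + k * α)| < r₁ := by
      have h1 : |t * S| ≤ |t| * (k * M) := by
        rw [abs_mul]
        exact mul_le_mul_of_nonneg_left hSb (abs_nonneg t)
      have h2 : |t| * (k * M) < r₁/2 := by
        have : |t| * (k * M + 1) < r₁ / 2 := by
          rw [hr₄def] at ht4
          rw [div_mul_eq_div_div] at ht4
          have hkM : (0:ℝ) < k * M + 1 := by positivity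
          calc |t| * (k*M+1) < (r₁ / 2 / (k*M+1)) * (k*M+1) := by
                exact mul_lt_mul_of_pos_right ht4 hkM
            _ = r₁/2 := by field_simp
        nlinarith [abs_nonneg t]
      calc |y - (x + k * α)| = |(y - y₀) + t * S| := by rw [hy₀]; ring_nf
        _ ≤ |y - y₀| + |t * S| := abs_add_le _ _
        _ < r₁/2 + r₁/2 := by
            refine add_lt_add_of_le_of_lt hyy₀ (lt_of_le_of_lt h1 h2)
        _ = r₁ := by ring
    have hstep : |F y t - (y + α + t * φ y)| ≤ δ/3 * |t| := hL t ht3 y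
    have hφd : |φ y - φ (x + k * α)| ≤ δ/3 := hUCr _ _ hykα
    have hiter : (fun y => F y t)^[k+1] x = F y t := by
      rw [Function.iterate_succ_apply', hy]
    have hsum : ∑ j ∈ Finset.range (k+1), φ (x + j * α) = S + φ (x + k * α) := by
      rw [Finset.sum_range_succ, hSdef]
    rw [hiter, hsum]
    have hdec : F y t - (x + ((k:ℕ)+1 : ℕ) * α + t * (S + φ (x + k * α)))
        = (F y t - (y + α + t * φ y)) + (y - y₀) + t * (φ y - φ (x + k * α)) := by
      rw [hy₀]; push_cast; ring
    rw [hdec]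
    have hδ'le : δ' ≤ δ/3 := min_le_left _ _
    calc |(F y t - (y + α + t * φ y)) + (y - y₀) + t * (φ y - φ (x + k * α))|
        ≤ |(F y t - (y + α + t * φ y)) + (y - y₀)| + |t * (φ y - φ (x + k * α))| := abs_add_le _ _
      _ ≤ |F y t - (y + α + t * φ y)| + |y - y₀| + |t| * |φ y - φ (x + k * α)| := by
          rw [abs_mul]
          exact add_le_add (abs_add_le _ _) le_rfl
      _ ≤ δ/3 * |t| + δ' * |t| + |t| * (δ/3) := by
          refine add_le_add (add_le_add hstep hIHx) ?_
          exact mul_le_mul_of_nonneg_left hφd (abs_nonneg t)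
      _ ≤ δ * |t| := by nlinarith [abs_nonneg t, mul_le_mul_of_nonneg_right hδ'le (abs_nonneg t)]


set_option maxHeartbeats 1000000 in
/-- Brunovský–Herman: for a C¹ family of circle diffeomorphisms with `f_0` an
irrational rotation `R_α`, the (lifted) rotation number is differentiable at
`t = 0` with derivative `∫_{S¹} ∂f/∂t(x, 0) dx`. -/
theorem rotNum_deriv_at_irrational_rotation (ε : ℝ) (hε : 0 < ε) (F : ℝ → ℝ → ℝ)
    (hC1 : ContDiffOn ℝ 1 (fun p : ℝ × ℝ => F p.1 p.2) (univ ×ˢ Ioo (-ε) ε))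
    (hper : ∀ x : ℝ, ∀ t ∈ Ioo (-ε) ε, F (x + 1) t = F x t + 1)
    (hmono : ∀ t ∈ Ioo (-ε) ε, StrictMono fun x => F x t)
    (α : ℝ) (hα : Irrational α) (h0 : ∀ x : ℝ, F x 0 = x + α)
    (ρ : ℝ → ℝ) (hρ : ∀ t ∈ Ioo (-ε) ε, HasTransNum (fun x => F x t) (ρ t)) :
    HasDerivWithinAt ρ (∫ x in (0:ℝ)..1, deriv (fun t => F x t) 0) (Ioo (-ε) ε) 0 := by
  have h0I : (0:ℝ) ∈ Ioo (-ε) ε := ⟨by linarith, hε⟩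
  have hIoo : Ioo (-ε) ε ∈ 𝓝 (0:ℝ) := Ioo_mem_nhds (by linarith) hε
  have hU : IsOpen ((univ : Set ℝ) ×ˢ Ioo (-ε) ε) := isOpen_univ.prod isOpen_Ioo
  have hmem : ∀ x : ℝ, ∀ t ∈ Ioo (-ε) ε, (x, t) ∈ (univ : Set ℝ) ×ˢ Ioo (-ε) ε := by
    intro x t ht; exact ⟨mem_univ x, ht⟩
  set Φ : ℝ → ℝ → ℝ := fun x t => deriv (fun s => F x s) t with hΦdef
  set φ : ℝ → ℝ := fun x => deriv (fun s => F x s) 0 with hφdef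
  have hφΦ : ∀ x, φ x = Φ x 0 := fun x => rfl
  have hD : ∀ x : ℝ, ∀ t ∈ Ioo (-ε) ε,
      HasDerivAt (fun s => F x s) (fderiv ℝ (fun p : ℝ × ℝ => F p.1 p.2) (x, t) (0, 1)) t := by
    intro x t ht
    have hdiff : DifferentiableAt ℝ (fun p : ℝ × ℝ => F p.1 p.2) (x, t) :=
      (hC1.differentiableOn one_ne_zero).differentiableAt (hU.mem_nhds (hmem x t ht))
    have hc : HasDerivAt (fun s : ℝ => (x, s)) ((0 : ℝ), (1 : ℝ)) t :=
      HasDerivAt.prodMk (hasDerivAt_const t x) (hasDerivAt_id t)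
    exact hdiff.hasFDerivAt.comp_hasDerivAt t hc
  have hΦeq : ∀ x : ℝ, ∀ t ∈ Ioo (-ε) ε,
      Φ x t = fderiv ℝ (fun p : ℝ × ℝ => F p.1 p.2) (x, t) (0, 1) := by
    intro x t ht; exact (hD x t ht).deriv
  have hDΦ : ∀ x : ℝ, ∀ t ∈ Ioo (-ε) ε, HasDerivAt (fun s => F x s) (Φ x t) t := by
    intro x t ht; rw [hΦeq x t ht]; exact hD x t ht
  have hΦcont : ContinuousOn (fun p : ℝ × ℝ => Φ p.1 p.2) ((univ : Set ℝ) ×ˢ Ioo (-ε) ε) := by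
    have h1 : ContinuousOn (fun p : ℝ × ℝ => fderiv ℝ (fun p : ℝ × ℝ => F p.1 p.2) p (0, 1))
        ((univ : Set ℝ) ×ˢ Ioo (-ε) ε) :=
      (hC1.continuousOn_fderiv_of_isOpen hU le_rfl).clm_apply continuousOn_const
    exact h1.congr fun p hp => hΦeq p.1 p.2 hp.2
  have hΦxcont : ∀ x : ℝ, ∀ t ∈ Ioo (-ε) ε, ContinuousOn (fun s => Φ x s) (uIcc (0:ℝ) t) := by
    intro x t ht
    have hsub : uIcc (0:ℝ) t ⊆ Ioo (-ε) ε := (ordConnected_Ioo).uIcc_subset h0I ht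
    exact hΦcont.comp (continuous_const.prodMk continuous_id).continuousOn
      (fun s hs => hmem x s (hsub hs))
  have hFTC : ∀ x : ℝ, ∀ t ∈ Ioo (-ε) ε, F x t - F x 0 = ∫ s in (0:ℝ)..t, Φ x s := by
    intro x t ht
    have hsub : uIcc (0:ℝ) t ⊆ Ioo (-ε) ε := (ordConnected_Ioo).uIcc_subset h0I ht
    symm
    apply intervalIntegral.integral_eq_sub_of_hasDerivAt
    · intro s hs; exact hDΦ x s (hsub hs)
    · exact (hΦxcont x t ht).intervalIntegrable
  have hperF : ∀ t ∈ Ioo (-ε) ε, Function.Periodic (fun x => F x t - x) 1 := by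
    intro t ht x; simp only [hper x t ht]; ring
  have hFint : ∀ (n : ℤ) (x t : ℝ), t ∈ Ioo (-ε) ε → F (x - n) t = F x t - n := by
    intro n x t ht
    have := (hperF t ht).sub_int_mul_eq (x := x) n
    simp only [mul_one] at this
    linarith [this]
  have hφper : Function.Periodic φ 1 := by
    intro x
    have hEq : (fun s => F (x + 1) s) =ᶠ[𝓝 (0:ℝ)] (fun s => F x s + 1) := by
      filter_upwards [hIoo] with s hs
      exact hper x s hs
    simp only [hφdef]
    rw [hEq.deriv_eq, deriv_add_const]
  have hφint : ∀ (n : ℤ) (x : ℝ), φ (x - n) = φ x := by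
    intro n x
    have := hφper.sub_int_mul_eq (x := x) n
    simpa using this
  have hφcont : Continuous φ := by
    have := hΦcont.comp_continuous (continuous_id.prodMk continuous_const)
      (fun x => hmem x 0 h0I)
    exact this
  obtain ⟨⟨M, hM, hMb⟩, hUC⟩ := phi_bound_uc φ hφcont hφint
  have hL1 := lin_approx ε hε F α Φ φ hφΦ h0 hΦcont hFTC hΦxcont hFint hφint
  have hiter := iter_approx ε hε F α φ M hM hMb hUC hL1
  have hBirk := birkhoff_unif φ hφcont hφint M hM hMb hUC α hα
  -- the derivative value
  set D : ℝ := ∫ u in (0:ℝ)..1, φ u with hDdef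
  -- ρ 0 = α
  have hρ0 : ρ 0 = α := by
    have h1 := hρ 0 h0I
    have hit : ∀ n : ℕ, (fun x => F x 0)^[n] 0 = n * α := by
      intro n; induction n with
      | zero => simp
      | succ n ih =>
        rw [Function.iterate_succ_apply', ih, h0]
        push_cast; ring
    have h2 : Tendsto (fun n : ℕ => (fun x => F x 0)^[n] 0 / (n:ℝ)) atTop (𝓝 α) := by
      have heq : (fun _ : ℕ => α) =ᶠ[atTop] (fun n : ℕ => (fun x => F x 0)^[n] 0 / (n:ℝ)) := by
        filter_upwards [eventually_gt_atTop 0] with n hn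
        rw [hit n]
        field_simp
      exact Tendsto.congr' heq tendsto_const_nhds
    exact tendsto_nhds_unique h1 h2
  -- assemble
  have hgoal : HasDerivWithinAt ρ D (Ioo (-ε) ε) 0 := by
    rw [hasDerivWithinAt_iff_tendsto_slope]
    rw [Metric.tendsto_nhds]
    intro δ hδ
    have hδ4 : (0:ℝ) < δ/4 := by linarith
    obtain ⟨N, hN0, hBN⟩ := hBirk (δ/4) hδ4
    have hNR : (0:ℝ) < N := by exact_mod_cast hN0
    obtain ⟨r, hr, hrε, hIT⟩ := hiter N (N * (δ/4)) (by positivity)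
    have h1 : ∀ᶠ t in 𝓝[Ioo (-ε) ε \ {0}] (0:ℝ), |t| < r := by
      apply Eventually.filter_mono nhdsWithin_le_nhds
      have : Metric.ball (0:ℝ) r ∈ 𝓝 (0:ℝ) := Metric.ball_mem_nhds 0 hr
      filter_upwards [this] with t ht
      simpa [Real.dist_eq] using ht
    filter_upwards [h1, eventually_mem_nhdsWithin] with t htr htmem
    obtain ⟨htI, ht0⟩ := htmem
    have ht0' : t ≠ 0 := by simpa using ht0
    have htabs : 0 < |t| := abs_pos.mpr ht0'
    -- translation number bounds
    have hτN : HasTransNum ((fun x => F x t)^[N]) ((N:ℝ) * ρ t) :=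
      transNum_iterate (hρ t htI) N hN0
    have hup : ∀ x : ℝ, (fun x => F x t)^[N] x ≤ x + ((N:ℝ) * α + t * (N * D) + 2 * N * (δ/4) * |t|) := by
      intro x
      have hI := abs_le.mp (hIT t htr x)
      have hA := abs_le.mp (hBN x)
      set Sx : ℝ := ∑ j ∈ Finset.range N, φ (x + j * α) with hSx
      have hprod : t * Sx ≤ t * (N * D) + N * (δ/4) * |t| := by
        have h3 : t * (Sx - N * D) ≤ |t| * |Sx - N * D| := by
          calc t * (Sx - N * D) ≤ |t * (Sx - N * D)| := le_abs_self _
            _ = |t| * |Sx - N * D| := abs_mul _ _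
        have h4 : |Sx - N * D| ≤ N * (δ/4) := by
          have h5 : |Sx / N - D| ≤ δ/4 := hA.2 |> fun _ => abs_le.mpr hA
          have h6 : Sx - N * D = (Sx / N - D) * N := by field_simp
          rw [h6, abs_mul, abs_of_pos hNR]
          nlinarith [mul_le_mul_of_nonneg_right h5 (le_of_lt hNR)]
        nlinarith [abs_nonneg t]
      nlinarith [hI.2]
    have hlo : ∀ x : ℝ, x + ((N:ℝ) * α + t * (N * D) - 2 * N * (δ/4) * |t|) ≤ (fun x => F x t)^[N] x := by
      intro x
      have hI := abs_le.mp (hIT t htr x)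
      have hA := abs_le.mp (hBN x)
      set Sx : ℝ := ∑ j ∈ Finset.range N, φ (x + j * α) with hSx
      have hprod : t * (N * D) - N * (δ/4) * |t| ≤ t * Sx := by
        have h3 : -(|t| * |Sx - N * D|) ≤ t * (Sx - N * D) := by
          calc -(|t| * |Sx - N * D|) = -|t * (Sx - N * D)| := by rw [abs_mul]
            _ ≤ t * (Sx - N * D) := neg_abs_le _
        have h4 : |Sx - N * D| ≤ N * (δ/4) := by
          have h5 : |Sx / N - D| ≤ δ/4 := abs_le.mpr hA
          have h6 : Sx - N * D = (Sx / N - D) * N := by field_simp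
          rw [h6, abs_mul, abs_of_pos hNR]
          nlinarith [mul_le_mul_of_nonneg_right h5 (le_of_lt hNR)]
        nlinarith [abs_nonneg t]
      nlinarith [hI.1]
    have hub := transNum_le hτN hup
    have hlb := transNum_ge hτN hlo
    have hub2 : ρ t ≤ α + t * D + 2 * (δ/4) * |t| := by
      have h7 : (N:ℝ) * ρ t ≤ (N:ℝ) * (α + t * D + 2 * (δ/4) * |t|) := by
        calc (N:ℝ) * ρ t ≤ (N:ℝ) * α + t * (N * D) + 2 * N * (δ/4) * |t| := hub
          _ = (N:ℝ) * (α + t * D + 2 * (δ/4) * |t|) := by ring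
      exact le_of_mul_le_mul_left h7 hNR
    have hlb2 : α + t * D - 2 * (δ/4) * |t| ≤ ρ t := by
      have h7 : (N:ℝ) * (α + t * D - 2 * (δ/4) * |t|) ≤ (N:ℝ) * ρ t := by
        calc (N:ℝ) * (α + t * D - 2 * (δ/4) * |t|)
            = (N:ℝ) * α + t * (N * D) - 2 * N * (δ/4) * |t| := by ring
          _ ≤ (N:ℝ) * ρ t := hlb
      exact le_of_mul_le_mul_left h7 hNR
    have hρt : |ρ t - α - t * D| ≤ 2 * (δ/4) * |t| :=
      abs_le.mpr ⟨by linarith, by linarith⟩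
    have hslope : dist (slope ρ 0 t) D < δ := by
      rw [slope_def_field, Real.dist_eq]
      have he : (ρ t - ρ 0) / (t - 0) - D = (ρ t - α - t * D) / t := by
        rw [hρ0, sub_zero]
        field_simp
      rw [he, abs_div]
      rw [div_lt_iff₀ htabs]
      calc |ρ t - α - t * D| ≤ 2 * (δ/4) * |t| := hρt
        _ < δ * |t| := by nlinarith [htabs]
    exact hslope
  exact hgoal
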